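/- Let p > N ≥ 1, R > 0, and Ω = {ξ ∈ ℝ^N : |ξ| > R}. For every C¹ function u compactly supported in Ω, ((p-N)/p)^p ∫_Ω |u|^p / (|ξ| - R)^p dξ ≤ ∫_Ω |∇u|^p dξ, using the pointwise inequality |ξ|^{(p-N)/(p-1)} - R^{(p-N)/(p-1)} ≤ |ξ|^{(1-N)/(p-1)} (|ξ| - R) valid for |ξ| > R. -/

import Mathlib

open Real MeasureTheory
set_option maxHeartbeats 1000000

section Helpers

variable {E : Type*} [NormedAddCommGroup E] [InnerProductSpace ℝ E]

private lemma hardy_fderiv_norm_rpow (s : ℝ) {x : E} (hx : x ≠ 0) :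
    HasFDerivAt (fun y : E => ‖y‖ ^ s) ((s * ‖x‖ ^ (s - 2)) • innerSL ℝ x) x := by
  have hn : (0:ℝ) < ‖x‖ := norm_pos_iff.mpr hx
  have h2 : (‖x‖ ^ 2 : ℝ) ≠ 0 := by positivity
  have H := (Real.hasDerivAt_rpow_const (p := s / 2) (Or.inl h2)).comp_hasFDerivAt x
    (hasStrictFDerivAt_norm_sq x).hasFDerivAt
  have hfun : ((fun t : ℝ => t ^ (s / 2)) ∘ (fun y : E => ‖y‖ ^ 2)) = (fun y : E => ‖y‖ ^ s) := by
    ext y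
    simp only [Function.comp_apply]
    rw [← Real.rpow_natCast ‖y‖ 2, ← Real.rpow_mul (norm_nonneg y),
      show ((2:ℕ):ℝ) * (s / 2) = s by push_cast; ring]
  rw [hfun] at H
  refine H.congr_fderiv ?_
  ext v
  simp only [ContinuousLinearMap.smul_apply, innerSL_apply_apply, smul_eq_mul, nsmul_eq_mul]
  rw [← Real.rpow_natCast ‖x‖ 2, ← Real.rpow_mul (norm_nonneg x)]
  push_cast
  rw [show (2:ℝ) * (s/2 - 1) = s - 2 by ring]
  ring

private lemma hardy_sum_apply {N : ℕ} (L : EuclideanSpace ℝ (Fin N) →L[ℝ] ℝ)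
    (y : EuclideanSpace ℝ (Fin N)) :
    ∑ i, L (EuclideanSpace.single i 1) * y i = L y := by
  conv_rhs => rw [← (EuclideanSpace.basisFun (Fin N) ℝ).sum_repr y]
  rw [map_sum]
  refine Finset.sum_congr rfl fun i _ => ?_
  rw [_root_.map_smul]
  simp [EuclideanSpace.basisFun_apply, smul_eq_mul, mul_comm]

private lemma hardy_ibp_zero {N : ℕ} {φ : EuclideanSpace ℝ (Fin N) → ℝ}
    (hdiff : Differentiable ℝ φ) (hint : Integrable φ)
    {v : EuclideanSpace ℝ (Fin N)} (hint' : Integrable (fun x => fderiv ℝ φ x v)) :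
    ∫ x, fderiv ℝ φ x v = 0 := by
  have h := integral_mul_fderiv_eq_neg_fderiv_mul_of_integrable (μ := volume)
    (f := φ) (g := fun _ => (1:ℝ)) (v := v)
    (by simpa using hint') (by simp) (by simpa using hint) (fun x _ => hdiff x)
    (fun x _ => differentiableAt_const _)
  simp only [fderiv_const, fderiv_const_apply, Pi.zero_apply, ContinuousLinearMap.zero_apply, mul_zero, mul_one,
    integral_zero] at h
  linarith [h]

private lemma hardy_alg {p c I J : ℝ} (hp : 1 < p) (hc : 0 < c) (hI : 0 ≤ I) (hJ : 0 ≤ J)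
    (h : c * I ≤ p * (I ^ ((p - 1) / p) * J ^ (1 / p))) : (c / p) ^ p * I ≤ J := by
  have hp0 : (0:ℝ) < p := lt_trans one_pos hp
  rcases eq_or_lt_of_le hI with h0 | hIpos
  · rw [← h0, mul_zero]; exact hJ
  · have hIa : (0:ℝ) < I ^ ((p - 1) / p) := Real.rpow_pos_of_pos hIpos _
    have hsplit : I = I ^ ((p - 1) / p) * I ^ (1 / p) := by
      rw [← Real.rpow_add hIpos]
      rw [show (p - 1) / p + 1 / p = 1 by field_simp; ring]
      rw [Real.rpow_one]
    have h2 : c * I ^ (1 / p) ≤ p * J ^ (1 / p) := by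
      have h' : (c * I ^ (1 / p)) * I ^ ((p - 1) / p) ≤ (p * J ^ (1 / p)) * I ^ ((p - 1) / p) := by
        calc (c * I ^ (1 / p)) * I ^ ((p - 1) / p)
            = c * (I ^ ((p - 1) / p) * I ^ (1 / p)) := by ring
          _ = c * I := by rw [← hsplit]
          _ ≤ p * (I ^ ((p - 1) / p) * J ^ (1 / p)) := h
          _ = (p * J ^ (1 / p)) * I ^ ((p - 1) / p) := by ring
      exact le_of_mul_le_mul_right h' hIa
    have h3 : (c * I ^ (1 / p)) ^ p ≤ (p * J ^ (1 / p)) ^ p :=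
      Real.rpow_le_rpow (by positivity) h2 hp0.le
    rw [Real.mul_rpow hc.le (by positivity), Real.mul_rpow hp0.le (by positivity),
      ← Real.rpow_mul hIpos.le, ← Real.rpow_mul hJ, one_div,
      inv_mul_cancel₀ hp0.ne', Real.rpow_one, Real.rpow_one] at h3
    rw [Real.div_rpow hc.le hp0.le, div_mul_eq_mul_div, div_le_iff₀ (by positivity)]
    linarith [h3]


private lemma hardy_cont_pattern {X β : Type*} [TopologicalSpace X] [TopologicalSpace β]
    {Ω T : Set X} (hT : IsClosed T) (hTΩ : T ⊆ Ω) {w : X → β} {z : β}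
    (h1 : ∀ x ∈ Ω, ContinuousAt w x) (h2 : ∀ x ∉ T, w x = z) : Continuous w := by
  rw [continuous_iff_continuousAt]
  intro x
  by_cases hx : x ∈ Ω
  · exact h1 x hx
  · have hxT : x ∉ T := fun h => hx (hTΩ h)
    have hev : w =ᶠ[nhds x] (fun _ => z) :=
      Filter.eventuallyEq_of_mem (hT.isOpen_compl.mem_nhds hxT) (fun y hy => h2 y hy)
    exact (continuousAt_congr hev).mpr continuousAt_const

private lemma hardy_clm_applyAt {X E F : Type*} [TopologicalSpace X] [NormedAddCommGroup E]
    [NormedSpace ℝ E] [NormedAddCommGroup F] [NormedSpace ℝ F]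
    {f : X → E →L[ℝ] F} {g : X → E} {x : X} (hf : ContinuousAt f x) (hg : ContinuousAt g x) :
    ContinuousAt (fun y => f y (g y)) x :=
  show ContinuousAt ((fun q : (E →L[ℝ] F) × E => q.1 q.2) ∘ fun y => (f y, g y)) x from ((isBoundedBilinearMap_apply (𝕜 := ℝ) (E := E) (F := F)).continuous.continuousAt).comp
    (hf.prodMk hg)

private lemma hardy_smulRightAt {X E F : Type*} [TopologicalSpace X] [NormedAddCommGroup E]
    [NormedSpace ℝ E] [NormedAddCommGroup F] [NormedSpace ℝ F]
    {f : X → E →L[ℝ] ℝ} {g : X → F} {x : X} (hf : ContinuousAt f x) (hg : ContinuousAt g x) :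
    ContinuousAt (fun y => (f y).smulRight (g y)) x :=
  show ContinuousAt ((fun q : (E →L[ℝ] ℝ) × F => q.1.smulRight q.2) ∘ fun y => (f y, g y)) x from ((isBoundedBilinearMap_smulRight (𝕜 := ℝ) (E := E) (F := F)).continuous.continuousAt).comp
    (hf.prodMk hg)

end Helpers

theorem stmt19 (N : ℕ) (hN : 1 ≤ N) (p R : ℝ) (hp : (N : ℝ) < p) (hR : 0 < R)
    (u : EuclideanSpace ℝ (Fin N) → ℝ) (hu : ContDiff ℝ 1 u) (hcs : HasCompactSupport u)
    (hsupp : tsupport u ⊆ {ξ : EuclideanSpace ℝ (Fin N) | R < ‖ξ‖}) :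
    (∀ ξ : EuclideanSpace ℝ (Fin N), R < ‖ξ‖ →
        ‖ξ‖ ^ ((p - N) / (p - 1)) - R ^ ((p - N) / (p - 1)) ≤
          ‖ξ‖ ^ ((1 - N) / (p - 1)) * (‖ξ‖ - R)) ∧
      ((p - N) / p) ^ p *
          ∫ ξ in {ξ : EuclideanSpace ℝ (Fin N) | R < ‖ξ‖}, |u ξ| ^ p / (‖ξ‖ - R) ^ p ≤
        ∫ ξ in {ξ : EuclideanSpace ℝ (Fin N) | R < ‖ξ‖}, ‖gradient u ξ‖ ^ p := by
  have hN1 : (1:ℝ) ≤ (N:ℝ) := by exact_mod_cast hN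
  have hp1 : (1:ℝ) < p := lt_of_le_of_lt hN1 hp
  have hp0 : (0:ℝ) < p := lt_trans one_pos hp1
  have hp1' : (0:ℝ) < p - 1 := by linarith
  have hpN : (0:ℝ) < p - N := by linarith
  set α : ℝ := (p - N) / (p - 1) with hαdef
  have hα0 : 0 < α := div_pos hpN hp1'
  have hα1 : (1 - (N:ℝ)) / (p - 1) = α - 1 := by
    rw [hαdef]; field_simp; ring
  -- part 1
  have part1 : ∀ ξ : EuclideanSpace ℝ (Fin N), R < ‖ξ‖ →
      ‖ξ‖ ^ ((p - N) / (p - 1)) - R ^ ((p - N) / (p - 1)) ≤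
        ‖ξ‖ ^ ((1 - N) / (p - 1)) * (‖ξ‖ - R) := by
    intro ξ hξ
    have hr0 : (0:ℝ) < ‖ξ‖ := lt_trans hR hξ
    rw [hα1, ← hαdef]
    have e1 : ‖ξ‖ ^ α = ‖ξ‖ ^ (α - 1) * ‖ξ‖ := by
      rw [← Real.rpow_add_one hr0.ne' (α - 1)]; ring_nf
    have e2 : R ^ α = R ^ (α - 1) * R := by
      rw [← Real.rpow_add_one hR.ne' (α - 1)]; ring_nf
    have h3 : ‖ξ‖ ^ (α - 1) ≤ R ^ (α - 1) :=
      Real.rpow_le_rpow_of_nonpos hR hξ.le (by linarith [div_le_one_of_le₀ (by linarith : p - N ≤ p - 1) hp1'.le])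
    have h4 : (0:ℝ) ≤ ‖ξ‖ ^ (α - 1) := Real.rpow_nonneg hr0.le _
    rw [e1, e2]
    nlinarith [h3, hR, h4]
  refine ⟨part1, ?_⟩
  classical
  set Ω : Set (EuclideanSpace ℝ (Fin N)) := {ξ : (EuclideanSpace ℝ (Fin N)) | R < ‖ξ‖} with hΩdef
  set T : Set (EuclideanSpace ℝ (Fin N)) := tsupport u with hTdef
  have hTΩ : T ⊆ Ω := hsupp
  have hTcl : IsClosed T := isClosed_closure
  have hTcomp : IsCompact T := hcs
  have hΩopen : IsOpen Ω := isOpen_lt continuous_const continuous_norm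
  have hudiff : Differentiable ℝ u := hu.differentiable one_ne_zero
  have hucont : Continuous u := hu.continuous
  have hfdcont : Continuous (fderiv ℝ u) := hu.continuous_fderiv one_ne_zero
  have hnormp : ContDiff ℝ 1 (fun y : (EuclideanSpace ℝ (Fin N)) => ‖u y‖ ^ p) := hu.norm_rpow hp1
  set m : ℝ := (N : ℝ) with hmdef
  have hu0 : ∀ x, x ∉ T → u x = 0 := fun x hx => image_eq_zero_of_notMem_tsupport hx
  have hev0 : ∀ x, x ∉ T → u =ᶠ[nhds x] 0 := fun x hx => notMem_tsupport_iff_eventuallyEq.mp hx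
  have hfd0 : ∀ x, x ∉ T → fderiv ℝ u x = 0 := fun x hx => by
    rw [(hev0 x hx).fderiv_eq]; exact fderiv_const_apply 0
  set Dφ : (EuclideanSpace ℝ (Fin N)) → (EuclideanSpace ℝ (Fin N)) →L[ℝ] ℝ := fun x => fderiv ℝ (fun y : (EuclideanSpace ℝ (Fin N)) => ‖u y‖ ^ p) x with hDφdef
  have hDφcont : Continuous Dφ := hnormp.continuous_fderiv one_ne_zero
  have hDφ0 : ∀ x, x ∉ T → Dφ x = 0 := fun x hx => by
    have hev : (fun y : (EuclideanSpace ℝ (Fin N)) => ‖u y‖ ^ p) =ᶠ[nhds x] (fun _ => (0:ℝ)) := by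
      filter_upwards [hev0 x hx] with y hy
      simp only [hy, Pi.zero_apply, norm_zero]
      exact Real.zero_rpow hp0.ne'
    rw [hDφdef]
    simp only []
    rw [hev.fderiv_eq]
    exact fderiv_const_apply 0
  have hΩr : ∀ x ∈ Ω, (0:ℝ) < ‖x‖ := fun x hx => lt_trans hR hx
  have hΩne : ∀ x ∈ Ω, x ≠ (0:(EuclideanSpace ℝ (Fin N))) := fun x hx => by
    intro h; have := hΩr x hx; rw [h] at this; simp at this
  set d : (EuclideanSpace ℝ (Fin N)) → ℝ := fun x => ‖x‖ ^ α - R ^ α with hddef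
  have hdcont : Continuous d := by
    have : Continuous fun x : (EuclideanSpace ℝ (Fin N)) => ‖x‖ ^ α :=
      continuous_norm.rpow_const (fun x => Or.inr hα0.le)
    exact this.sub continuous_const
  have hdpos : ∀ x ∈ Ω, 0 < d x := fun x hx => by
    have := Real.rpow_lt_rpow hR.le (hx : R < ‖x‖) hα0
    simpa [hddef] using sub_pos.mpr this
  set V : (EuclideanSpace ℝ (Fin N)) → (EuclideanSpace ℝ (Fin N)) := fun x => ‖x‖ ^ (-m) • x with hVdef
  set Dd : (EuclideanSpace ℝ (Fin N)) → (EuclideanSpace ℝ (Fin N)) →L[ℝ] ℝ := fun x => (α * ‖x‖ ^ (α - 2)) • innerSL ℝ x with hDddef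
  set Dg : (EuclideanSpace ℝ (Fin N)) → (EuclideanSpace ℝ (Fin N)) →L[ℝ] ℝ := fun x => ((1 - p) * d x ^ (1 - p - 1)) • Dd x with hDgdef
  set DV : (EuclideanSpace ℝ (Fin N)) → (EuclideanSpace ℝ (Fin N)) →L[ℝ] (EuclideanSpace ℝ (Fin N)) := fun x =>
    ‖x‖ ^ (-m) • ContinuousLinearMap.id ℝ (EuclideanSpace ℝ (Fin N)) +
      (((-m) * ‖x‖ ^ (-m - 2)) • innerSL ℝ x).smulRight x with hDVdef
  set F : (EuclideanSpace ℝ (Fin N)) → (EuclideanSpace ℝ (Fin N)) := fun x => (‖u x‖ ^ p * d x ^ (1 - p)) • V x with hFdef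
  set DF : (EuclideanSpace ℝ (Fin N)) → (EuclideanSpace ℝ (Fin N)) →L[ℝ] (EuclideanSpace ℝ (Fin N)) := fun x =>
    (‖u x‖ ^ p * d x ^ (1 - p)) • DV x +
      ((‖u x‖ ^ p) • Dg x + (d x ^ (1 - p)) • Dφ x).smulRight (V x) with hDFdef
  have hnu0 : ∀ x, x ∉ T → ‖u x‖ ^ p = 0 := fun x hx => by
    rw [hu0 x hx, norm_zero]; exact Real.zero_rpow hp0.ne'
  have hF0 : ∀ x, x ∉ T → F x = 0 := fun x hx => by
    simp [hFdef, hu0 x hx, Real.zero_rpow hp0.ne']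
  have hDF0 : ∀ x, x ∉ T → DF x = 0 := fun x hx => by
    ext w
    simp [hDFdef, hu0 x hx, hDφ0 x hx, Real.zero_rpow hp0.ne']
  -- differentiability of F everywhere
  have hVdiff : ∀ x ∈ Ω, HasFDerivAt V (DV x) x := fun x hx => by
    have h := (hardy_fderiv_norm_rpow (-m) (hΩne x hx)).smul (hasFDerivAt_id x)
    rw [show (-m) - 2 = -m - 2 by ring] at h
    exact h
  have hVcontAt : ∀ x ∈ Ω, ContinuousAt V x := fun x hx => (hVdiff x hx).differentiableAt.continuousAt
  have hφderiv : ∀ x, HasFDerivAt (fun y : (EuclideanSpace ℝ (Fin N)) => ‖u y‖ ^ p) (Dφ x) x := fun x =>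
    ((hasFDerivAt_norm_rpow (u x) hp1).comp x (hudiff x).hasFDerivAt).differentiableAt.hasFDerivAt
  have hdderiv : ∀ x ∈ Ω, HasFDerivAt d (Dd x) x := fun x hx => by
    have h := (hardy_fderiv_norm_rpow α (hΩne x hx)).sub_const (R ^ α)
    exact h
  have hgderiv : ∀ x ∈ Ω, HasFDerivAt (fun y => d y ^ (1 - p)) (Dg x) x := fun x hx =>
    (Real.hasDerivAt_rpow_const (p := 1 - p) (Or.inl (hdpos x hx).ne')).comp_hasFDerivAt x
      (hdderiv x hx)
  have hFderiv : ∀ x, HasFDerivAt F (DF x) x := by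
    intro x
    by_cases hx : x ∈ Ω
    · have hf' : HasFDerivAt (fun y : (EuclideanSpace ℝ (Fin N)) => ‖u y‖ ^ p * d y ^ (1 - p))
          ((‖u x‖ ^ p) • Dg x + (d x ^ (1 - p)) • Dφ x) x :=
        (hφderiv x).mul (hgderiv x hx)
      exact hf'.smul (hVdiff x hx)
    · have hxT : x ∉ T := fun h => hx (hTΩ h)
      have hev : F =ᶠ[nhds x] (fun _ => (0:(EuclideanSpace ℝ (Fin N)))) :=
        Filter.eventuallyEq_of_mem (hTcl.isOpen_compl.mem_nhds hxT) (fun y hy => hF0 y hy)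
      have h0 : HasFDerivAt F (0 : (EuclideanSpace ℝ (Fin N)) →L[ℝ] (EuclideanSpace ℝ (Fin N))) x :=
        (hasFDerivAt_const (0:(EuclideanSpace ℝ (Fin N))) x).congr_of_eventuallyEq hev
      rw [hDF0 x hxT]
      exact h0
  have hFdiff : Differentiable ℝ F := fun x => (hFderiv x).differentiableAt
  have hFcont : Continuous F := hFdiff.continuous
  have hrpowAt : ∀ (s : ℝ), ∀ x ∈ Ω, ContinuousAt (fun y : EuclideanSpace ℝ (Fin N) => ‖y‖ ^ s) x :=
    fun s x hx => continuous_norm.continuousAt.rpow_const (Or.inl (hΩr x hx).ne')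
  have hnormpcont : Continuous fun y : EuclideanSpace ℝ (Fin N) => ‖u y‖ ^ p := hnormp.continuous
  have hinner : Continuous (fun y : EuclideanSpace ℝ (Fin N) => innerSL ℝ y) := (innerSL ℝ).continuous
  have hDFcont : Continuous DF := by
    refine hardy_cont_pattern hTcl hTΩ (fun x hx => ?_) hDF0
    have hdAt : ContinuousAt (fun y => d y ^ (1 - p)) x :=
      (hdcont.continuousAt).rpow_const (Or.inl (hdpos x hx).ne')
    have h1 : ContinuousAt (fun y => ‖u y‖ ^ p * d y ^ (1 - p)) x :=
      (hnormpcont.continuousAt).mul hdAt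
    have hDVAt : ContinuousAt DV x := by
      refine ContinuousAt.add ?_ ?_
      · exact (hrpowAt (-m) x hx).smul continuousAt_const
      · exact hardy_smulRightAt
          ((continuousAt_const.mul (hrpowAt (-m - 2) x hx)).smul hinner.continuousAt)
          continuousAt_id
    have hDdAt : ContinuousAt Dd x :=
      (continuousAt_const.mul (hrpowAt (α - 2) x hx)).smul hinner.continuousAt
    have hDgAt : ContinuousAt Dg x :=
      (continuousAt_const.mul ((hdcont.continuousAt).rpow_const
        (Or.inl (hdpos x hx).ne'))).smul hDdAt
    have hSAt : ContinuousAt (fun y => (‖u y‖ ^ p) • Dg y + (d y ^ (1 - p)) • Dφ y) x :=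
      ((hnormpcont.continuousAt).smul hDgAt).add (hdAt.smul hDφcont.continuousAt)
    exact (h1.smul hDVAt).add (hardy_smulRightAt hSAt (hVcontAt x hx))
  set A₁ : EuclideanSpace ℝ (Fin N) → ℝ := fun x => d x ^ (1 - p) * (Dφ x) (V x) with hA₁def
  set A₂ : EuclideanSpace ℝ (Fin N) → ℝ :=
    fun x => ‖u x‖ ^ p * (d x ^ (-p) * ‖x‖ ^ (α - m)) with hA₂def
  have hA₁0 : ∀ x, x ∉ T → A₁ x = 0 := fun x hx => by simp [hA₁def, hDφ0 x hx]
  have hA₂0 : ∀ x, x ∉ T → A₂ x = 0 := fun x hx => by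
    simp [hA₂def, hu0 x hx, Real.zero_rpow hp0.ne']
  have hA₁cont : Continuous A₁ := by
    refine hardy_cont_pattern hTcl hTΩ (fun x hx => ?_) hA₁0
    exact ((hdcont.continuousAt).rpow_const (Or.inl (hdpos x hx).ne')).mul
      (hardy_clm_applyAt hDφcont.continuousAt (hVcontAt x hx))
  have hA₂cont : Continuous A₂ := by
    refine hardy_cont_pattern hTcl hTΩ (fun x hx => ?_) hA₂0
    exact (hnormpcont.continuousAt).mul
      (((hdcont.continuousAt).rpow_const (Or.inl (hdpos x hx).ne')).mul (hrpowAt (α - m) x hx))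
  have hIntPat : ∀ (w : EuclideanSpace ℝ (Fin N) → ℝ), Continuous w →
      (∀ x, x ∉ T → w x = 0) → Integrable w (volume : Measure (EuclideanSpace ℝ (Fin N))) :=
    fun w hw h0 => hw.integrable_of_hasCompactSupport (HasCompactSupport.intro hTcomp h0)
  have hIntA₁ : Integrable A₁ := hIntPat _ hA₁cont hA₁0
  have hIntA₂ : Integrable A₂ := hIntPat _ hA₂cont hA₂0
  have hIntDFi : ∀ i : Fin N, Integrable (fun x => (DF x (EuclideanSpace.single i 1)) i) := by
    intro i
    refine hIntPat _ ?_ (fun x hx => by rw [hDF0 x hx]; rfl)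
    exact ((EuclideanSpace.proj (𝕜 := ℝ) i).continuous).comp (hDFcont.clm_apply continuous_const)
  have hkey : ∀ i : Fin N, ∫ x, (DF x (EuclideanSpace.single i 1)) i = 0 := by
    intro i
    have hFi : ∀ x, HasFDerivAt (fun y => F y i)
        ((EuclideanSpace.proj (𝕜 := ℝ) i).comp (DF x)) x := fun x =>
      (EuclideanSpace.proj (𝕜 := ℝ) i).hasFDerivAt.comp x (hFderiv x)
    have hFid : Differentiable ℝ (fun y => F y i) := fun x => (hFi x).differentiableAt
    have hfe : ∀ x, fderiv ℝ (fun y => F y i) x (EuclideanSpace.single i 1)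
        = (DF x (EuclideanSpace.single i 1)) i := fun x => by
      rw [(hFi x).fderiv]; rfl
    have hInt1 : Integrable (fun y => F y i) :=
      hIntPat _ (((EuclideanSpace.proj (𝕜 := ℝ) i).continuous).comp hFcont)
        (fun x hx => by rw [hF0 x hx]; rfl)
    have hInt2 : Integrable (fun x => fderiv ℝ (fun y => F y i) x (EuclideanSpace.single i 1)) := by
      rw [show (fun x => fderiv ℝ (fun y => F y i) x (EuclideanSpace.single i 1))
          = (fun x => (DF x (EuclideanSpace.single i 1)) i) from funext hfe]
      exact hIntDFi i
    have h := hardy_ibp_zero hFid hInt1 hInt2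
    rw [show (fun x => fderiv ℝ (fun y => F y i) x (EuclideanSpace.single i 1))
        = (fun x => (DF x (EuclideanSpace.single i 1)) i) from funext hfe] at h
    exact h
  have hdivsum : ∀ x, (∑ i, (DF x (EuclideanSpace.single i 1)) i)
      = A₁ x + ((1 - p) * α) * A₂ x := by
    intro x
    by_cases hx : x ∈ Ω
    · have hr : (0:ℝ) < ‖x‖ := hΩr x hx
      have hDFa : ∀ (w : EuclideanSpace ℝ (Fin N)) (j : Fin N), (DF x w) j =
          (‖u x‖ ^ p * d x ^ (1 - p)) * (‖x‖ ^ (-m) * w j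
              + (-m * ‖x‖ ^ (-m - 2)) * (inner ℝ x w : ℝ) * x j)
            + (‖u x‖ ^ p * (((1 - p) * d x ^ (1 - p - 1)) * ((α * ‖x‖ ^ (α - 2)) * (inner ℝ x w : ℝ)))
              + d x ^ (1 - p) * (Dφ x) w) * (‖x‖ ^ (-m) * x j) := by
        intro w j
        simp only [hDFdef, hDVdef, hDgdef, hDddef, hVdef, ContinuousLinearMap.add_apply,
          ContinuousLinearMap.coe_smul', Pi.smul_apply, ContinuousLinearMap.smulRight_apply,
          ContinuousLinearMap.smul_apply, ContinuousLinearMap.id_apply, innerSL_apply_apply,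
          PiLp.add_apply, PiLp.smul_apply, smul_eq_mul]
        all_goals ring
      have expand : ∀ i : Fin N, (DF x (EuclideanSpace.single i 1)) i =
          (‖u x‖ ^ p * d x ^ (1 - p) * ‖x‖ ^ (-m)) * ((EuclideanSpace.single i (1:ℝ)) i)
          + (‖u x‖ ^ p * d x ^ (1 - p) * (-m * ‖x‖ ^ (-m - 2))
              + ‖u x‖ ^ p * ((1 - p) * d x ^ (1 - p - 1)) * (α * ‖x‖ ^ (α - 2)) * ‖x‖ ^ (-m))
            * ((inner ℝ x (EuclideanSpace.single i 1) : ℝ) * x i)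
          + (d x ^ (1 - p) * ‖x‖ ^ (-m)) * ((Dφ x) (EuclideanSpace.single i 1) * x i) := by
        intro i; rw [hDFa]; ring
      rw [Finset.sum_congr rfl (fun i _ => expand i)]
      rw [Finset.sum_add_distrib, Finset.sum_add_distrib, ← Finset.mul_sum, ← Finset.mul_sum,
        ← Finset.mul_sum]
      have hs1 : ∑ i : Fin N, (EuclideanSpace.single i (1:ℝ)) i = m := by
        rw [hmdef]; simp [EuclideanSpace.single_apply]
      have hs2 : ∑ i : Fin N, (inner ℝ x (EuclideanSpace.single i 1) : ℝ) * x i = ‖x‖ ^ (2:ℕ) := by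
        have h := hardy_sum_apply (innerSL ℝ x) x
        simp only [innerSL_apply_apply] at h
        rw [h, real_inner_self_eq_norm_sq]
      have hs3 : ∑ i : Fin N, (Dφ x) (EuclideanSpace.single i 1) * x i = (Dφ x) x :=
        hardy_sum_apply (Dφ x) x
      rw [hs1, hs2, hs3]
      have hDφV : (Dφ x) (V x) = ‖x‖ ^ (-m) * (Dφ x) x := by
        rw [hVdef]
        simp only []
        rw [_root_.map_smul, smul_eq_mul]
      have e1 : ‖x‖ ^ (-m - 2) * ((‖x‖ : ℝ) ^ (2:ℕ)) = ‖x‖ ^ (-m) := by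
        rw [← Real.rpow_natCast ‖x‖ 2, ← Real.rpow_add hr]
        norm_num
      have e2 : ‖x‖ ^ (α - 2) * ‖x‖ ^ (-m) * ((‖x‖ : ℝ) ^ (2:ℕ)) = ‖x‖ ^ (α - m) := by
        rw [← Real.rpow_natCast ‖x‖ 2, ← Real.rpow_add hr, ← Real.rpow_add hr]
        congr 1; ring
      have e3 : d x ^ (1 - p - 1) = d x ^ (-p) := by norm_num
      simp only [hA₁def, hA₂def]
      rw [hDφV, e3] -- may need e3 rewrite in goal
      linear_combination (‖u x‖ ^ p * d x ^ (1 - p) * (-m)) * e1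
        + (‖u x‖ ^ p * ((1 - p) * d x ^ (-p)) * α) * e2
    · have hxT : x ∉ T := fun h => hx (hTΩ h)
      rw [hA₁0 x hxT, hA₂0 x hxT, hDF0 x hxT]
      simp
  have hsum0 : ∫ x, (A₁ x + ((1 - p) * α) * A₂ x) = 0 := by
    rw [show (fun x => A₁ x + ((1 - p) * α) * A₂ x)
        = (fun x => ∑ i, (DF x (EuclideanSpace.single i 1)) i) from funext fun x => (hdivsum x).symm]
    rw [integral_finset_sum _ (fun i _ => hIntDFi i)]
    simp [hkey]
  have hKI : ∫ x, A₁ x = (p - 1) * α * ∫ x, A₂ x := by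
    have h2 : ∫ x, (A₁ x + ((1 - p) * α) * A₂ x)
        = (∫ x, A₁ x) + ((1 - p) * α) * ∫ x, A₂ x := by
      rw [integral_add hIntA₁ (hIntA₂.const_mul _), MeasureTheory.integral_const_mul]
    rw [h2] at hsum0
    linarith [hsum0]
  have hgradnorm : ∀ x, ‖gradient u x‖ = ‖fderiv ℝ u x‖ := fun x => by
    rw [show gradient u x
        = (InnerProductSpace.toDual ℝ (EuclideanSpace ℝ (Fin N))).symm (fderiv ℝ u x) from rfl]
    exact LinearIsometryEquiv.norm_map _ _
  have hA₂nn : ∀ x, 0 ≤ A₂ x := by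
    intro x
    by_cases hx : x ∈ Ω
    · have hd1 := hdpos x hx
      simp only [hA₂def]
      exact mul_nonneg (Real.rpow_nonneg (norm_nonneg _) _)
        (mul_nonneg (Real.rpow_nonneg hd1.le _) (Real.rpow_nonneg (norm_nonneg _) _))
    · rw [hA₂0 x (fun h => hx (hTΩ h))]
  have hgp0 : ∀ x, x ∉ T → ‖fderiv ℝ u x‖ ^ p = 0 := fun x hx => by
    rw [hfd0 x hx]; simp [Real.zero_rpow hp0.ne']
  have hIntJ : Integrable (fun x => ‖fderiv ℝ u x‖ ^ p) :=
    hIntPat _ (hfdcont.norm.rpow_const fun x => Or.inr hp0.le) hgp0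
  have hVnorm : ∀ x ∈ Ω, ‖V x‖ = ‖x‖ ^ (1 - m) := fun x hx => by
    have hr := hΩr x hx
    simp only [hVdef]
    rw [norm_smul, Real.norm_eq_abs, abs_of_nonneg (Real.rpow_nonneg (norm_nonneg x) _)]
    rw [← Real.rpow_add_one hr.ne' (-m)]
    congr 1; ring
  have hbound : ∀ x, |A₁ x| ≤ p * ((A₂ x) ^ ((p - 1) / p) * ‖fderiv ℝ u x‖) := by
    intro x
    by_cases hx : x ∈ Ω
    · have hr := hΩr x hx
      have hd1 : 0 < d x := hdpos x hx
      have hDφx : Dφ x = ((p * ‖u x‖ ^ (p - 2)) • innerSL ℝ (u x)).comp (fderiv ℝ u x) :=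
        ((hasFDerivAt_norm_rpow (u x) hp1).comp x (hudiff x).hasFDerivAt).fderiv
      have hA1x : A₁ x = d x ^ (1 - p)
          * ((p * ‖u x‖ ^ (p - 2)) * ((u x) * (fderiv ℝ u x (V x)))) := by
        simp only [hA₁def]
        rw [hDφx]
        simp [ContinuousLinearMap.comp_apply, ContinuousLinearMap.smul_apply, innerSL_apply_apply,
          RCLike.inner_apply, starRingEnd_apply, star_trivial, smul_eq_mul, mul_comm]
      have hw : |fderiv ℝ u x (V x)| ≤ ‖fderiv ℝ u x‖ * ‖x‖ ^ (1 - m) := by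
        rw [← hVnorm x hx, ← Real.norm_eq_abs]
        exact (fderiv ℝ u x).le_opNorm (V x)
      have hA2pow : (A₂ x) ^ ((p - 1) / p)
          = ‖u x‖ ^ (p - 1) * (d x ^ (1 - p) * ‖x‖ ^ (1 - m)) := by
        simp only [hA₂def]
        rw [Real.mul_rpow (Real.rpow_nonneg (norm_nonneg _) _)
            (mul_nonneg (Real.rpow_nonneg hd1.le _) (Real.rpow_nonneg (norm_nonneg _) _)),
          Real.mul_rpow (Real.rpow_nonneg hd1.le _) (Real.rpow_nonneg (norm_nonneg _) _),
          ← Real.rpow_mul (norm_nonneg _), ← Real.rpow_mul hd1.le,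
          ← Real.rpow_mul (norm_nonneg _)]
        rw [show p * ((p - 1) / p) = p - 1 from by field_simp,
          show (-p) * ((p - 1) / p) = 1 - p from by field_simp; ring,
          show (α - m) * ((p - 1) / p) = 1 - m from by rw [hαdef]; field_simp; ring]
      have hupow : ‖u x‖ ^ (p - 2) * ‖u x‖ ≤ ‖u x‖ ^ (p - 1) := by
        rcases eq_or_ne (u x) 0 with h0 | h0
        · rw [h0, norm_zero, mul_zero]
          exact Real.rpow_nonneg le_rfl _
        · rw [← Real.rpow_add_one (norm_ne_zero_iff.mpr h0) (p - 2),
            show p - 2 + 1 = p - 1 from by ring]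
      have habs : |A₁ x| ≤ d x ^ (1 - p)
          * (p * ‖u x‖ ^ (p - 2) * (‖u x‖ * (‖fderiv ℝ u x‖ * ‖x‖ ^ (1 - m)))) := by
        rw [hA1x, abs_mul, abs_of_nonneg (Real.rpow_nonneg hd1.le _), abs_mul,
          abs_of_nonneg (by positivity : (0:ℝ) ≤ p * ‖u x‖ ^ (p - 2)), abs_mul,
          ← Real.norm_eq_abs (u x)]
        have := mul_le_mul_of_nonneg_left hw (norm_nonneg (u x))
        have h2 := mul_le_mul_of_nonneg_left this (by positivity : (0:ℝ) ≤ p * ‖u x‖ ^ (p - 2))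
        exact mul_le_mul_of_nonneg_left h2 (Real.rpow_nonneg hd1.le _)
      rw [hA2pow]
      have hfin : d x ^ (1 - p)
          * (p * ‖u x‖ ^ (p - 2) * (‖u x‖ * (‖fderiv ℝ u x‖ * ‖x‖ ^ (1 - m))))
          ≤ p * (‖u x‖ ^ (p - 1) * (d x ^ (1 - p) * ‖x‖ ^ (1 - m)) * ‖fderiv ℝ u x‖) := by
        have hd2 : (0:ℝ) ≤ d x ^ (1 - p) := Real.rpow_nonneg hd1.le _
        have hx2 : (0:ℝ) ≤ ‖x‖ ^ (1 - m) := Real.rpow_nonneg (norm_nonneg _) _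
        nlinarith [mul_le_mul_of_nonneg_right hupow
            (mul_nonneg (mul_nonneg hd2 hx2) (norm_nonneg (fderiv ℝ u x))), hp0.le,
          mul_nonneg (mul_nonneg hd2 hx2) (norm_nonneg (fderiv ℝ u x))]
      exact le_trans habs hfin
    · have hxT : x ∉ T := fun h => hx (hTΩ h)
      rw [hA₁0 x hxT, hA₂0 x hxT, hfd0 x hxT]
      simp [Real.zero_rpow (by positivity : ((p:ℝ) - 1) / p ≠ 0)]
  have hconj : ((p / (p - 1)) : ℝ).HolderConjugate p := by
    rw [Real.holderConjugate_iff]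
    constructor
    · rw [lt_div_iff₀ hp1']; linarith
    · field_simp; ring
  set G : EuclideanSpace ℝ (Fin N) → ℝ := fun x => (A₂ x) ^ ((p - 1) / p) with hGdef
  have hGnn : ∀ x, 0 ≤ G x := fun x => Real.rpow_nonneg (hA₂nn x) _
  have hGcont : Continuous G := hA₂cont.rpow_const fun x => Or.inr (by positivity)
  have hG0 : ∀ x, x ∉ T → G x = 0 := fun x hx => by
    simp only [hGdef, hA₂0 x hx]
    exact Real.zero_rpow (by positivity)
  have hGmem : MemLp G (ENNReal.ofReal (p / (p - 1))) :=
    hGcont.memLp_of_hasCompactSupport (HasCompactSupport.intro hTcomp hG0)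
  have hgradmem : MemLp (fun x => ‖fderiv ℝ u x‖) (ENNReal.ofReal p) :=
    (hfdcont.norm).memLp_of_hasCompactSupport
      (HasCompactSupport.intro hTcomp (fun x hx => by rw [hfd0 x hx]; simp))
  have hHold := integral_mul_le_Lp_mul_Lq_of_nonneg hconj
    (Filter.Eventually.of_forall hGnn)
    (Filter.Eventually.of_forall fun x => norm_nonneg (fderiv ℝ u x)) hGmem hgradmem
  rw [show (fun x => G x ^ (p / (p - 1))) = A₂ from funext fun x => by
      rw [hGdef]
      simp only []
      rw [← Real.rpow_mul (hA₂nn x),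
        show ((p - 1) / p) * (p / (p - 1)) = 1 from by field_simp, Real.rpow_one],
    one_div_div] at hHold
  have hIntG : Integrable (fun x => G x * ‖fderiv ℝ u x‖) :=
    hIntPat _ (hGcont.mul hfdcont.norm) (fun x hx => by rw [hG0 x hx, zero_mul])
  have hchain : (p - m) * ∫ x, A₂ x
      ≤ p * ((∫ x, A₂ x) ^ ((p - 1) / p) * (∫ x, ‖fderiv ℝ u x‖ ^ p) ^ (1 / p)) := by
    have h1 : ∫ x, A₁ x ≤ ∫ x, |A₁ x| :=
      integral_mono hIntA₁ hIntA₁.abs fun x => le_abs_self _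
    have h2 : ∫ x, |A₁ x| ≤ ∫ x, p * (G x * ‖fderiv ℝ u x‖) :=
      integral_mono hIntA₁.abs (hIntG.const_mul p) hbound
    have h3 : ∫ x, p * (G x * ‖fderiv ℝ u x‖) = p * ∫ x, G x * ‖fderiv ℝ u x‖ :=
      MeasureTheory.integral_const_mul p _
    have hcN : (p - 1) * α = p - m := by rw [hαdef]; field_simp
    have h4 := hKI
    rw [hcN] at h4
    calc (p - m) * ∫ x, A₂ x = ∫ x, A₁ x := h4.symm
      _ ≤ ∫ x, p * (G x * ‖fderiv ℝ u x‖) := le_trans h1 h2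
      _ = p * ∫ x, G x * ‖fderiv ℝ u x‖ := h3
      _ ≤ p * ((∫ x, A₂ x) ^ ((p - 1) / p) * (∫ x, ‖fderiv ℝ u x‖ ^ p) ^ (1 / p)) :=
        mul_le_mul_of_nonneg_left hHold hp0.le
  have hI₂nn : 0 ≤ ∫ x, A₂ x := integral_nonneg hA₂nn
  have hJnn : 0 ≤ ∫ x, ‖fderiv ℝ u x‖ ^ p :=
    integral_nonneg fun x => Real.rpow_nonneg (norm_nonneg _) _
  have hfinal2 : ((p - m) / p) ^ p * ∫ x, A₂ x ≤ ∫ x, ‖fderiv ℝ u x‖ ^ p :=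
    hardy_alg hp1 hpN hI₂nn hJnn hchain
  -- assembly
  have hRHS : ∫ ξ in Ω, ‖gradient u ξ‖ ^ p = ∫ x, ‖fderiv ℝ u x‖ ^ p := by
    rw [show (fun ξ => ‖gradient u ξ‖ ^ p) = fun ξ => ‖fderiv ℝ u ξ‖ ^ p from
      funext fun ξ => by rw [hgradnorm]]
    exact setIntegral_eq_integral_of_forall_compl_eq_zero
      fun x hx => hgp0 x (fun h => hx (hTΩ h))
  have hI₂' : ∫ ξ in Ω, A₂ ξ = ∫ x, A₂ x :=
    setIntegral_eq_integral_of_forall_compl_eq_zero fun x hx => hA₂0 x (fun h => hx (hTΩ h))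
  have hΩmeas : MeasurableSet Ω := hΩopen.measurableSet
  have hcore : ∀ x ∈ Ω, |u x| ^ p / (‖x‖ - R) ^ p ≤ A₂ x := by
    intro x hx
    have hr0 : (0:ℝ) < ‖x‖ := hΩr x hx
    have hd1 : 0 < d x := hdpos x hx
    have hrR : (0:ℝ) < ‖x‖ - R := sub_pos.mpr hx
    have hdle : d x ≤ ‖x‖ ^ (α - 1) * (‖x‖ - R) := by
      have hpt := part1 x hx
      rw [hα1] at hpt
      rw [← hαdef] at hpt
      exact hpt
    have h1 : (‖x‖ ^ (α - 1) * (‖x‖ - R)) ^ (-p) ≤ d x ^ (-p) :=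
      Real.rpow_le_rpow_of_nonpos hd1 hdle (neg_nonpos.mpr hp0.le)
    have h2 : (‖x‖ ^ (α - 1) * (‖x‖ - R)) ^ (-p)
        = ‖x‖ ^ ((α - 1) * (-p)) * (‖x‖ - R) ^ (-p) := by
      rw [Real.mul_rpow (Real.rpow_nonneg hr0.le _) hrR.le, ← Real.rpow_mul hr0.le]
    have h3 : ‖x‖ ^ ((α - 1) * (-p)) * ‖x‖ ^ (α - m) = 1 := by
      rw [← Real.rpow_add hr0,
        show (α - 1) * (-p) + (α - m) = 0 from by rw [hαdef]; field_simp; ring]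
      exact Real.rpow_zero _
    have hA2x : A₂ x = ‖u x‖ ^ p * (d x ^ (-p) * ‖x‖ ^ (α - m)) := rfl
    calc |u x| ^ p / (‖x‖ - R) ^ p
        = ‖u x‖ ^ p * ((‖x‖ - R) ^ (-p) * (‖x‖ ^ ((α - 1) * (-p)) * ‖x‖ ^ (α - m))) := by
          rw [h3, mul_one, Real.rpow_neg hrR.le, Real.norm_eq_abs, div_eq_mul_inv]
      _ = ‖u x‖ ^ p * (((‖x‖ ^ (α - 1) * (‖x‖ - R)) ^ (-p)) * ‖x‖ ^ (α - m)) := by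
          rw [h2]; ring
      _ ≤ ‖u x‖ ^ p * (d x ^ (-p) * ‖x‖ ^ (α - m)) := by
          refine mul_le_mul_of_nonneg_left ?_ (Real.rpow_nonneg (norm_nonneg _) _)
          exact mul_le_mul_of_nonneg_right h1 (Real.rpow_nonneg hr0.le _)
      _ = A₂ x := hA2x.symm
  have hhnn : ∀ x ∈ Ω, 0 ≤ |u x| ^ p / (‖x‖ - R) ^ p := fun x hx =>
    div_nonneg (Real.rpow_nonneg (abs_nonneg _) _)
      (Real.rpow_nonneg (sub_nonneg.mpr (le_of_lt hx)) _)
  have hhmeas : AEStronglyMeasurable (fun x : EuclideanSpace ℝ (Fin N) =>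
      |u x| ^ p / (‖x‖ - R) ^ p) (volume.restrict Ω) := by
    refine (Measurable.div ?_ ?_).aestronglyMeasurable
    · exact (hucont.abs.rpow_const fun x => Or.inr hp0.le).measurable
    · exact ((continuous_norm.sub continuous_const).rpow_const
        fun x => Or.inr hp0.le).measurable
  have hIntOn : IntegrableOn (fun x : EuclideanSpace ℝ (Fin N) =>
      |u x| ^ p / (‖x‖ - R) ^ p) Ω := by
    refine Integrable.mono (hIntA₂.integrableOn) hhmeas ?_
    rw [ae_restrict_iff' hΩmeas]
    refine Filter.Eventually.of_forall fun x hx => ?_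
    rw [Real.norm_eq_abs, Real.norm_eq_abs, abs_of_nonneg (hhnn x hx),
      abs_of_nonneg (hA₂nn x)]
    exact hcore x hx
  have hLHS : ∫ ξ in Ω, |u ξ| ^ p / (‖ξ‖ - R) ^ p ≤ ∫ x, A₂ x := by
    rw [← hI₂']
    exact setIntegral_mono_on hIntOn hIntA₂.integrableOn hΩmeas hcore
  calc ((p - m) / p) ^ p * ∫ ξ in Ω, |u ξ| ^ p / (‖ξ‖ - R) ^ p
      ≤ ((p - m) / p) ^ p * ∫ x, A₂ x :=
        mul_le_mul_of_nonneg_left hLHS (Real.rpow_nonneg (by positivity) _)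
    _ ≤ ∫ x, ‖fderiv ℝ u x‖ ^ p := hfinal2
    _ = ∫ ξ in Ω, ‖gradient u ξ‖ ^ p := hRHS.symm
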